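/- Let q ∈ ℂ×. The matrix of the map φ: ℂ[L_L] → (ℂ²)^{⊗L} given by φ(π) = Σ_ε ∏_{i<π(i)} δ_{ε_i + ε_{π(i)}, 1} (−q)^{−ε_i + 1/2} |ε⟩ has full rank; i.e., the vectors {φ(π) : π a link pattern of size L} are linearly independent for every nonzero q (where (−q)^{1/2} is a fixed square root). -/

import Mathlib

open Finset

section LP
variable {L : ℕ}

/-- The word (Dyck word) of a matching: 0 at openers, 1 at closers. -/
def wordOf (f : Fin L → Fin L) (i : Fin L) : Fin 2 :=
  if i < f i then 0 else 1

lemma wordOf_eq_zero_iff {f : Fin L → Fin L} {i : Fin L} :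
    wordOf f i = 0 ↔ i < f i := by
  unfold wordOf; split <;> simp_all

lemma wordOf_eq_one_iff {f : Fin L → Fin L} {i : Fin L} :
    wordOf f i = 1 ↔ ¬ i < f i := by
  unfold wordOf; split <;> simp_all

/-- Compatibility of a matching with a spin configuration. -/
def Compat (f : Fin L → Fin L) (ε : Fin L → Fin 2) : Prop :=
  ∀ i, (ε i : ℕ) + (ε (f i) : ℕ) = 1

lemma fin2_cases (a : Fin 2) : a = 0 ∨ a = 1 := by omega

lemma compat_word (f : Fin L → Fin L) (hinv : ∀ i, f (f i) = i) (hne : ∀ i, f i ≠ i) :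
    Compat f (wordOf f) := by
  intro i
  rcases lt_or_gt_of_ne (hne i).symm with h | h
  · -- i < f i : opener
    have h1 : wordOf f i = 0 := wordOf_eq_zero_iff.2 h
    have h2 : wordOf f (f i) = 1 := by
      rw [wordOf_eq_one_iff, hinv]; exact fun h' => absurd (h.trans h') (lt_irrefl i)
    rw [h1, h2]; rfl
  · have h1 : wordOf f i = 1 := wordOf_eq_one_iff.2 (fun h' => absurd (h'.trans h) (lt_irrefl i))
    have h2 : wordOf f (f i) = 0 := by rw [wordOf_eq_zero_iff, hinv]; exact h
    rw [h1, h2]; rfl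

/-- Interval closure: arcs stay inside an arc of a noncrossing matching. -/
lemma interval_mem {f : Fin L → Fin L} (hinv : ∀ i, f (f i) = i)
    (hnc : ¬ ∃ i j k l : Fin L, i < j ∧ j < k ∧ k < l ∧ f i = k ∧ f j = l)
    {i k : Fin L} (hi : i < f i) (h1 : i < k) (h2 : k < f i) : i < f k ∧ f k < f i := by
  rcases lt_trichotomy (f k) i with h | h | h
  · exact absurd ⟨f k, i, k, f i, h, h1, h2, hinv k, rfl⟩ hnc
  · exfalso
    have : f (f k) = f i := by rw [h]
    rw [hinv] at this
    exact absurd this h2.ne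
  · refine ⟨h, ?_⟩
    rcases lt_trichotomy (f k) (f i) with h' | h' | h'
    · exact h'
    · exfalso
      have : f (f k) = f (f i) := by rw [h']
      rw [hinv, hinv] at this
      exact absurd this h1.ne'
    · exact absurd ⟨i, k, f i, f k, h1, h2, h', rfl, rfl⟩ hnc

/-- Key step in injectivity of the word map. -/
lemma keyB {f g : Fin L → Fin L}
    (hfinv : ∀ i, f (f i) = i)
    (hfnc : ¬ ∃ i j k l : Fin L, i < j ∧ j < k ∧ k < l ∧ f i = k ∧ f j = l)
    (hginv : ∀ i, g (g i) = i)
    (hw : wordOf f = wordOf g) (j : Fin L)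
    (IH : ∀ c, c < j → f c < c → f c = g c)
    (hj : f j < j) (hlt : f j < g j) (hj' : g j < j) : False := by
  set i' := g j with hi'
  have hfi : f (f j) = j := hfinv j
  -- i' is an opener of g, hence of f
  have hop' : i' < g i' := by rw [hi', hginv]; exact hj'
  have hopf : i' < f i' := by
    rw [← wordOf_eq_zero_iff, hw, wordOf_eq_zero_iff]; exact hop'
  -- i' lies inside the arc (f j, j) of f
  have hmem : f j < f i' ∧ f i' < f (f j) := interval_mem hfinv hfnc
    (by rw [hfi]; exact hj) hlt (by rw [hfi]; exact hj')
  rw [hfi] at hmem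
  set c := f i' with hc
  have hcc : f c < c := by rw [hc, hfinv]; exact hopf
  have hce : f c = g c := IH c hmem.2 hcc
  have : g c = i' := by rw [← hce, hc, hfinv]
  have : g i' = c := by rw [← this, hginv]
  rw [hi', hginv] at this
  exact absurd this.symm hmem.2.ne

/-- Injectivity on closers. -/
lemma closers_eq {f g : Fin L → Fin L}
    (hfinv : ∀ i, f (f i) = i) (hfne : ∀ i, f i ≠ i)
    (hfnc : ¬ ∃ i j k l : Fin L, i < j ∧ j < k ∧ k < l ∧ f i = k ∧ f j = l)
    (hginv : ∀ i, g (g i) = i) (hgne : ∀ i, g i ≠ i)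
    (hgnc : ¬ ∃ i j k l : Fin L, i < j ∧ j < k ∧ k < l ∧ g i = k ∧ g j = l)
    (hw : wordOf f = wordOf g) :
    ∀ j : Fin L, f j < j → f j = g j := by
  by_contra hcon
  push_neg at hcon
  obtain ⟨j, hj, hmin⟩ := Finset.exists_min_image
    (univ.filter (fun j : Fin L => f j < j ∧ f j ≠ g j)) id
    (by obtain ⟨j, h1, h2⟩ := hcon; exact ⟨j, by simp [h1, h2]⟩)
  simp only [mem_filter, mem_univ, true_and] at hj
  obtain ⟨hj1, hj2⟩ := hj
  have hj1' : g j < j := by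
    have : wordOf f j = 1 := wordOf_eq_one_iff.2 (asymm hj1)
    rw [hw, wordOf_eq_one_iff] at this
    exact lt_of_le_of_ne (le_of_not_gt this) (hgne j)
  have IH : ∀ c, c < j → f c < c → f c = g c := by
    intro c hcj hcc
    by_contra hne
    have := hmin c (by simp [hcc, hne])
    simp only [id] at this
    exact absurd hcj (not_lt.2 this)
  rcases lt_or_gt_of_ne hj2 with h | h
  · exact keyB hfinv hfnc hginv hw j IH hj1 h hj1'
  · refine keyB hginv hgnc hfinv hw.symm j ?_ hj1' h hj1
    intro c hcj hcc
    have hfc : f c < c := by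
      have : wordOf g c = 1 := wordOf_eq_one_iff.2 (asymm hcc)
      rw [← hw, wordOf_eq_one_iff] at this
      exact lt_of_le_of_ne (le_of_not_gt this) (hfne c)
    exact (IH c hcj hfc).symm

/-- Injectivity of the word map on link patterns. -/
lemma word_injective {f g : Fin L → Fin L}
    (hfinv : ∀ i, f (f i) = i) (hfne : ∀ i, f i ≠ i)
    (hfnc : ¬ ∃ i j k l : Fin L, i < j ∧ j < k ∧ k < l ∧ f i = k ∧ f j = l)
    (hginv : ∀ i, g (g i) = i) (hgne : ∀ i, g i ≠ i)
    (hgnc : ¬ ∃ i j k l : Fin L, i < j ∧ j < k ∧ k < l ∧ g i = k ∧ g j = l)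
    (hw : wordOf f = wordOf g) : f = g := by
  have hcl := closers_eq hfinv hfne hfnc hginv hgne hgnc hw
  funext j
  rcases lt_or_gt_of_ne (hfne j).symm with h | h
  · -- j opener of f
    set k := f j with hk
    have hfk : f k < k := by rw [hk, hfinv]; exact h
    have := hcl k hfk
    rw [hk, hfinv] at this
    have : g (g k) = g j := by rw [← this]
    rw [hginv] at this
    rw [← this]
  · exact hcl j h

/-- Lemma A: compatibility forces the word to be lexicographically ≤ ε. -/
lemma lexA {f : Fin L → Fin L} (hinv : ∀ i, f (f i) = i) (hne : ∀ i, f i ≠ i)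
    {ε : Fin L → Fin 2} (hcomp : Compat f ε) (hneq : wordOf f ≠ ε) :
    ∃ i, (∀ j, j < i → wordOf f j = ε j) ∧ wordOf f i < ε i := by
  obtain ⟨i, hi, hmin⟩ := Finset.exists_min_image
    (univ.filter (fun i : Fin L => wordOf f i ≠ ε i)) id
    (by obtain ⟨i, h⟩ := Function.ne_iff.1 hneq; exact ⟨i, by simp [h]⟩)
  simp only [mem_filter, mem_univ, true_and] at hi
  have hagree : ∀ j, j < i → wordOf f j = ε j := by
    intro j hji
    by_contra hne'
    have := hmin j (by simp [hne'])
    simp only [id] at this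
    exact absurd hji (not_lt.2 this)
  refine ⟨i, hagree, ?_⟩
  rcases lt_or_gt_of_ne hi with h | h
  · exact h
  · exfalso
    -- ε i < wordOf f i, so ε i = 0 and wordOf f i = 1
    have hε0 : (ε i : ℕ) = 0 := by omega
    have hw1 : wordOf f i = 1 := by
      rcases fin2_cases (wordOf f i) with h0 | h1
      · rw [h0] at h; omega
      · exact h1
    have hfi : f i < i := by
      rw [wordOf_eq_one_iff] at hw1
      exact lt_of_le_of_ne (le_of_not_gt hw1) (hne i)
    have hcj : (ε i : ℕ) + (ε (f i) : ℕ) = 1 := hcomp i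
    have hεj : (ε (f i) : ℕ) = 1 := by omega
    have := hagree (f i) hfi
    have hwj : (wordOf f (f i) : ℕ) = 1 := by rw [this]; omega
    have : wordOf f (f i) = 1 := by omega
    rw [wordOf_eq_one_iff, hinv] at this
    exact this hfi
end LP

/-- The vectors `φ(π) ∈ (ℂ²)^{⊗L}` (realized as functions `{0,1}^L → ℂ`),
`φ(π)(ε) = ∏_{arcs i < π(i)} δ_{ε_i+ε_{π(i)},1} ρ^{1−2ε_i}` where `ρ² = −q ≠ 0`,
indexed by link patterns `π` of size `L`, are linearly independent. -/
theorem stmt10 (L : ℕ) (hL : Even L) (q ρ : ℂ) (hq : q ≠ 0) (hρ : ρ ^ 2 = -q) :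
    LinearIndependent ℂ
      (fun (π : {f : Fin L → Fin L //
          (∀ i, f (f i) = i) ∧ (∀ i, f i ≠ i) ∧
          ¬ ∃ i j k l : Fin L, i < j ∧ j < k ∧ k < l ∧ f i = k ∧ f j = l})
        (ε : Fin L → Fin 2) =>
        ∏ i ∈ Finset.univ.filter (fun i : Fin L => (i : ℕ) < (π.val i : ℕ)),
          (if (ε i : ℕ) + (ε (π.val i) : ℕ) = 1 then
            ρ ^ ((1 : ℤ) - 2 * ((ε i : ℕ) : ℤ)) else 0)) := by
  classical
  have hρ0 : ρ ≠ 0 := by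
    intro h; rw [h] at hρ; simp at hρ; exact hq (by rw [← neg_neg q, ← hρ]; ring)
  set LP := {f : Fin L → Fin L //
      (∀ i, f (f i) = i) ∧ (∀ i, f i ≠ i) ∧
      ¬ ∃ i j k l : Fin L, i < j ∧ j < k ∧ k < l ∧ f i = k ∧ f j = l} with hLP
  set v : LP → (Fin L → Fin 2) → ℂ := fun π ε =>
    ∏ i ∈ Finset.univ.filter (fun i : Fin L => (i : ℕ) < (π.val i : ℕ)),
      (if (ε i : ℕ) + (ε (π.val i) : ℕ) = 1 then
        ρ ^ ((1 : ℤ) - 2 * ((ε i : ℕ) : ℤ)) else 0) with hv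
  -- compatibility from nonvanishing
  have hcompat : ∀ (π : LP) (ε : Fin L → Fin 2), v π ε ≠ 0 → Compat π.val ε := by
    intro π ε hne
    obtain ⟨hinv, hnf, hnc⟩ := π.prop
    have hop : ∀ i : Fin L, i < π.val i → (ε i : ℕ) + (ε (π.val i) : ℕ) = 1 := by
      intro i hi
      by_contra hcon
      apply hne
      rw [hv]
      refine Finset.prod_eq_zero (Finset.mem_filter.2 ⟨Finset.mem_univ i, hi⟩) ?_
      simp [hcon]
    intro i
    rcases lt_or_gt_of_ne (hnf i).symm with h | h
    · exact hop i h
    · have h' : π.val i < π.val (π.val i) := by rw [hinv]; exact h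
      have := hop (π.val i) h'
      rw [hinv] at this
      omega
  -- nonvanishing at own word
  have hdiag : ∀ π : LP, v π (wordOf π.val) ≠ 0 := by
    intro π
    obtain ⟨hinv, hnf, hnc⟩ := π.prop
    rw [hv]
    refine Finset.prod_ne_zero_iff.2 ?_
    intro i hi
    rw [Finset.mem_filter] at hi
    have hop : i < π.val i := hi.2
    have h0 : wordOf π.val i = 0 := wordOf_eq_zero_iff.2 hop
    have h1 : wordOf π.val (π.val i) = 1 := by
      rw [wordOf_eq_one_iff, hinv]; exact asymm hop
    rw [h0, h1]
    simp only [Fin.val_zero, Fin.val_one, Nat.cast_zero]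
    norm_num [hρ0]
  haveI : WellFoundedLT (Fin L) := inferInstance
  letI : LinearOrder (Lex (Fin L → Fin 2)) := Pi.Lex.linearOrder
  rw [linearIndependent_iff']
  intro s g hsum
  by_contra hcon
  push_neg at hcon
  obtain ⟨i0, hi0s, hi0⟩ := hcon
  set t := s.filter (fun π => g π ≠ 0) with ht
  have htne : t.Nonempty := ⟨i0, Finset.mem_filter.2 ⟨hi0s, hi0⟩⟩
  obtain ⟨π, hπt, hπmin⟩ := Finset.exists_min_image t
    (fun π => toLex (wordOf π.val)) htne
  have hπs : π ∈ s := (Finset.mem_filter.1 hπt).1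
  have hgπ : g π ≠ 0 := (Finset.mem_filter.1 hπt).2
  have heval : ∑ π' ∈ s, g π' * v π' (wordOf π.val) = 0 := by
    have := congrFun hsum (wordOf π.val)
    simpa [Finset.sum_apply] using this
  have hsingle : ∑ π' ∈ s, g π' * v π' (wordOf π.val) = g π * v π (wordOf π.val) := by
    refine Finset.sum_eq_single π ?_ (fun h => absurd hπs h)
    intro π' hπ's hπ'ne
    by_cases hgπ' : g π' = 0
    · rw [hgπ']; ring
    · by_cases hvπ' : v π' (wordOf π.val) = 0
      · rw [hvπ']; ring
      · exfalso
        obtain ⟨hinv', hnf', hnc'⟩ := π'.prop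
        obtain ⟨hinv, hnf, hnc⟩ := π.prop
        have hcomp := hcompat π' _ hvπ'
        by_cases hweq : wordOf π'.val = wordOf π.val
        · exact hπ'ne (Subtype.ext (word_injective hinv' hnf' hnc' hinv hnf hnc hweq))
        · obtain ⟨i, hagree, hlt⟩ := lexA hinv' hnf' hcomp hweq
          have hlex : toLex (wordOf π'.val) < toLex (wordOf π.val) := ⟨i, hagree, hlt⟩
          have := hπmin π' (Finset.mem_filter.2 ⟨hπ's, hgπ'⟩)
          exact absurd hlex (not_lt.2 this)
  rw [hsingle] at heval
  exact hgπ ((mul_eq_zero.1 heval).resolve_right (hdiag π))
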